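/- For ℓ ≥ 2, the Cesàro mean of the generalized abundancy index converges: lim_{N→∞} (1/N) Σ_{n=1}^{N} B(ℓ,n)/n^{ℓ-1} = ζ(2)·ζ(3)···ζ(ℓ). -/

import Mathlib

open Filter

/-- B(ℓ,n) as a sum over multiplicative flags d1 | d2 | ··· | d_{ℓ-1} | n. -/
def Bflag (ℓ n : ℕ) : ℕ :=
  ∑ d ∈ (Fintype.piFinset fun _ : Fin (ℓ-1) => Finset.range (n+1)) |>.filter
      (fun d => (∀ i j : Fin (ℓ-1), (i:ℕ)+1 = (j:ℕ) → d i ∣ d j) ∧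
        ∀ i : Fin (ℓ-1), (i:ℕ) = ℓ - 2 → d i ∣ n),
    ∏ i, d i

/-- ζ(j) = Σ_{m ≥ 1} m^{-j}. -/
noncomputable def zetaR (j : ℕ) : ℝ := ∑' m : ℕ+, (1 : ℝ) / (m : ℝ) ^ j

/-! ### Auxiliary combinatorics -/

def Bf (k n : ℕ) : ℕ :=
  ∑ d ∈ (Fintype.piFinset fun _ : Fin k => Finset.range (n+1)) |>.filter
      (fun d => (∀ i j : Fin k, (i:ℕ)+1 = (j:ℕ) → d i ∣ d j) ∧
        ∀ i : Fin k, (i:ℕ) = k - 1 → d i ∣ n),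
    ∏ i, d i

lemma Bflag_eq_Bf (ℓ n : ℕ) : Bflag ℓ n = Bf (ℓ-1) n := rfl

lemma chain_dvd_aux {m : ℕ} (d : Fin m → ℕ)
    (h : ∀ i j : Fin m, (i:ℕ)+1 = (j:ℕ) → d i ∣ d j) (i : Fin m) :
    ∀ t : ℕ, ∀ hj : (i:ℕ) + t < m, d i ∣ d ⟨(i:ℕ)+t, hj⟩ := by
  intro t
  induction t with
  | zero => intro hj; simp
  | succ v ih =>
      intro hj
      have hv : (i:ℕ) + v < m := by omega
      exact (ih hv).trans (h ⟨(i:ℕ)+v, hv⟩ ⟨(i:ℕ)+v+1, by omega⟩ rfl)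

lemma chain_dvd {m : ℕ} (d : Fin m → ℕ)
    (h : ∀ i j : Fin m, (i:ℕ)+1 = (j:ℕ) → d i ∣ d j) (i j : Fin m)
    (hij : (i:ℕ) ≤ (j:ℕ)) : d i ∣ d j := by
  have := chain_dvd_aux d h i ((j:ℕ) - (i:ℕ)) (by omega)
  have hj : (⟨(i:ℕ) + ((j:ℕ) - (i:ℕ)), by omega⟩ : Fin m) = j := by
    apply Fin.ext; simp; omega
  rwa [hj] at this

lemma Bf_zero (n : ℕ) : Bf 0 n = 1 := by simp [Bf]

lemma Bf_succ (k n : ℕ) (hn : 1 ≤ n) :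
    Bf (k+1) n = ∑ a ∈ n.divisors, a * Bf k a := by
  have hn0 : n ≠ 0 := by omega
  unfold Bf
  simp only [Finset.mul_sum, Nat.add_sub_cancel]
  rw [Finset.sum_sigma' n.divisors]
  refine Finset.sum_nbij' (i := fun d => ⟨d (Fin.last k), Fin.init d⟩)
    (j := fun p => Fin.snoc p.2 p.1) ?_ ?_ ?_ ?_ ?_
  · intro d hd
    simp only [Finset.mem_filter, Fintype.mem_piFinset, Finset.mem_range] at hd
    obtain ⟨hrange, hchain, hlast⟩ := hd
    have hdl : d (Fin.last k) ∣ n := hlast (Fin.last k) (by simp)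
    have hdlpos : 0 < d (Fin.last k) := Nat.pos_of_ne_zero (by rintro h0; rw [h0] at hdl; omega)
    simp only [Finset.mem_sigma, Nat.mem_divisors, Finset.mem_filter,
      Fintype.mem_piFinset, Finset.mem_range]
    refine ⟨⟨hdl, hn0⟩, fun i => ?_, fun i j hij => ?_, fun i hi => ?_⟩
    · have : d i.castSucc ∣ d (Fin.last k) := chain_dvd d hchain _ _ (by simp)
      exact Nat.lt_succ_of_le (Nat.le_of_dvd hdlpos this)
    · exact hchain i.castSucc j.castSucc (by simpa using hij)
    · have hk : 0 < k := i.pos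
      exact chain_dvd d hchain i.castSucc (Fin.last k) (by simp)
  · rintro ⟨a, e⟩ hp
    simp only [Finset.mem_sigma, Nat.mem_divisors, Finset.mem_filter,
      Fintype.mem_piFinset, Finset.mem_range] at hp
    obtain ⟨⟨han, -⟩, hrange, hchain, hlast⟩ := hp
    have hapos : 0 < a := Nat.pos_of_ne_zero (by rintro h0; rw [h0] at han; omega)
    have haN : a ≤ n := Nat.le_of_dvd (by omega) han
    simp only [Finset.mem_filter, Fintype.mem_piFinset, Finset.mem_range]
    refine ⟨fun i => ?_, fun i j hij => ?_, fun i hi => ?_⟩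
    · rcases Nat.lt_or_ge (i:ℕ) k with hlt | hge
      · have hi' : i = Fin.castSucc ⟨(i:ℕ), hlt⟩ := Fin.ext rfl
        rw [hi', Fin.snoc_castSucc]
        have := hrange ⟨(i:ℕ), hlt⟩; omega
      · have hi' : i = Fin.last k := Fin.ext (by have := i.isLt; simp; omega)
        rw [hi', Fin.snoc_last]; omega
    · rcases Nat.lt_or_ge (j:ℕ) k with hjlt | hjge
      · have hilt : (i:ℕ) < k := by omega
        have hi' : i = Fin.castSucc ⟨(i:ℕ), hilt⟩ := Fin.ext rfl
        have hj' : j = Fin.castSucc ⟨(j:ℕ), hjlt⟩ := Fin.ext rfl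
        rw [hi', hj', Fin.snoc_castSucc, Fin.snoc_castSucc]
        exact hchain _ _ (by simpa using hij)
      · have hj' : j = Fin.last k := Fin.ext (by have := j.isLt; simp; omega)
        have hilt : (i:ℕ) < k := by have := j.isLt; omega
        have hi' : i = Fin.castSucc ⟨(i:ℕ), hilt⟩ := Fin.ext rfl
        rw [hi', hj', Fin.snoc_castSucc, Fin.snoc_last]
        refine hlast ⟨(i:ℕ), hilt⟩ ?_
        have : (j:ℕ) = k := by rw [hj']; simp
        simp; omega
    · have : i = Fin.last k := Fin.ext (by simpa using hi)
      rw [this, Fin.snoc_last]; exact han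
  · intro d hd; simp [Fin.snoc_init_self]
  · rintro ⟨a, e⟩ hp; simp [Fin.init_snoc, Fin.snoc_last]
  · intro d hd
    rw [Fin.prod_univ_castSucc]
    exact mul_comm _ _

/-! ### The recursive form and its Cesàro means -/

def T : ℕ → ℕ → ℕ
  | 0, _ => 1
  | k+1, n => ∑ a ∈ n.divisors, a * T k a

lemma T_eq_Bf (k : ℕ) : ∀ n : ℕ, 1 ≤ n → T k n = Bf k n := by
  induction k with
  | zero => intro n hn; rw [Bf_zero]; rfl
  | succ k ih =>
      intro n hn
      rw [show T (k+1) n = ∑ a ∈ n.divisors, a * T k a from rfl, Bf_succ k n hn]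
      exact Finset.sum_congr rfl fun a ha => by
        rw [ih a (Nat.pos_of_mem_divisors ha)]

noncomputable def g (k n : ℕ) : ℝ := (T k n : ℝ) / (n : ℝ) ^ k

noncomputable def A (k N : ℕ) : ℝ := ∑ n ∈ Finset.Icc 1 N, g k n

lemma g_nonneg (k n : ℕ) : 0 ≤ g k n := by unfold g; positivity

lemma g_zero (n : ℕ) : g 0 n = 1 := by simp [g, T]

lemma g_succ (k n : ℕ) (hn : 1 ≤ n) :
    g (k+1) n = ∑ c ∈ n.divisors, (1/(c:ℝ))^(k+1) * g k (n/c) := by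
  have h1 : g (k+1) n = ∑ a ∈ n.divisors, (a:ℝ) * T k a / (n:ℝ)^(k+1) := by
    unfold g
    rw [show T (k+1) n = ∑ a ∈ n.divisors, a * T k a from rfl]
    push_cast
    rw [Finset.sum_div]
  rw [h1, ← Nat.sum_div_divisors n (fun a => (a:ℝ) * T k a / (n:ℝ)^(k+1))]
  refine Finset.sum_congr rfl fun c hc => ?_
  obtain ⟨hcn, hn0⟩ := Nat.mem_divisors.mp hc
  have hc0 : 0 < c := Nat.pos_of_mem_divisors hc
  have hb0 : 0 < n / c := Nat.div_pos (Nat.le_of_dvd (by omega) hcn) hc0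
  have hmul : n = c * (n / c) := (Nat.mul_div_cancel' hcn).symm
  have hcast : (n:ℝ) = (c:ℝ) * ((n/c : ℕ):ℝ) := by exact_mod_cast hmul
  unfold g
  rw [hcast]
  have hc' : (c:ℝ) ≠ 0 := by positivity
  have hb' : ((n/c : ℕ):ℝ) ≠ 0 := by positivity
  field_simp
  have h6 : (c:ℝ)^(k+1) * (c:ℝ)⁻¹^(k+1) = 1 := by rw [← mul_pow, mul_inv_cancel₀ hc', one_pow]
  linear_combination (-(((n/c : ℕ) : ℝ) * ((n/c : ℕ) : ℝ)^k * ((T k (n/c) : ℕ) : ℝ))) * h6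

lemma A_succ (k N : ℕ) :
    A (k+1) N = ∑ c ∈ Finset.Icc 1 N, (1/(c:ℝ))^(k+1) * A k (N / c) := by
  unfold A
  have h1 : ∀ n ∈ Finset.Icc 1 N, g (k+1) n
      = ∑ c ∈ n.divisors, (1/(c:ℝ))^(k+1) * g k (n/c) := by
    intro n hn
    exact g_succ k n (Finset.mem_Icc.mp hn).1
  rw [Finset.sum_congr rfl h1]
  simp only [Finset.mul_sum]
  rw [Finset.sum_sigma' (Finset.Icc 1 N) (fun n => n.divisors),
    Finset.sum_sigma' (Finset.Icc 1 N) (fun c => Finset.Icc 1 (N / c))]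
  refine Finset.sum_nbij' (i := fun p => ⟨p.2, p.1 / p.2⟩)
    (j := fun q => ⟨q.1 * q.2, q.1⟩) ?_ ?_ ?_ ?_ ?_
  · rintro ⟨n, c⟩ hp
    simp only [Finset.mem_sigma, Finset.mem_Icc, Nat.mem_divisors] at hp ⊢
    obtain ⟨⟨hn1, hnN⟩, hcn, -⟩ := hp
    have hc0 : 0 < c := Nat.pos_of_dvd_of_pos hcn (by omega)
    refine ⟨⟨hc0, le_trans (Nat.le_of_dvd (by omega) hcn) hnN⟩,
      Nat.div_pos (Nat.le_of_dvd (by omega) hcn) hc0, Nat.div_le_div_right hnN⟩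
  · rintro ⟨c, m⟩ hq
    simp only [Finset.mem_sigma, Finset.mem_Icc, Nat.mem_divisors] at hq ⊢
    obtain ⟨⟨hc1, hcN⟩, hm1, hmN⟩ := hq
    have hmc : m * c ≤ N := (Nat.le_div_iff_mul_le (by omega)).mp hmN
    have hcm : c * m ≤ N := by rw [mul_comm]; exact hmc
    have hcm0 : 0 < c * m := Nat.mul_pos (by omega) (by omega)
    exact ⟨⟨hcm0, hcm⟩, ⟨m, rfl⟩, by omega⟩
  · rintro ⟨n, c⟩ hp
    simp only [Finset.mem_sigma, Finset.mem_Icc, Nat.mem_divisors] at hp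
    obtain ⟨⟨hn1, -⟩, hcn, -⟩ := hp
    simp [Nat.mul_div_cancel' hcn]
  · rintro ⟨c, m⟩ hq
    simp only [Finset.mem_sigma, Finset.mem_Icc] at hq
    have hc0 : 0 < c := by omega
    simp [Nat.mul_div_cancel_left m hc0]
  · rintro ⟨n, c⟩ hp
    rfl

/-! ### Zeta facts -/

lemma zetaR_eq_nat (j : ℕ) (hj : 1 ≤ j) : zetaR j = ∑' c : ℕ, (1/(c:ℝ))^j := by
  unfold zetaR
  have h := Function.Injective.tsum_eq (g := fun m : ℕ+ => (m : ℕ))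
    (fun a b hab => PNat.coe_injective hab)
    (f := fun c : ℕ => (1/(c:ℝ))^j) ?_
  · rw [← h]
    refine tsum_congr fun m => ?_
    rw [div_pow, one_pow]
  · intro c hc
    simp only [Function.mem_support] at hc
    have : c ≠ 0 := by
      rintro rfl
      apply hc
      simp [zero_pow (by omega : j ≠ 0)]
    exact ⟨⟨c, Nat.pos_of_ne_zero this⟩, rfl⟩

lemma summable_pow (j : ℕ) (hj : 2 ≤ j) : Summable (fun c : ℕ => (1/(c:ℝ))^j) := by
  have := Real.summable_one_div_nat_pow.mpr (show 1 < j by omega)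
  refine this.congr fun c => ?_
  rw [div_pow, one_pow]

lemma zetaR_nonneg (j : ℕ) : 0 ≤ zetaR j := by
  unfold zetaR
  exact tsum_nonneg fun m => by positivity

lemma sum_le_zetaR (j : ℕ) (hj : 2 ≤ j) (s : Finset ℕ) :
    ∑ c ∈ s, (1/(c:ℝ))^j ≤ zetaR j := by
  rw [zetaR_eq_nat j (by omega)]
  exact Summable.sum_le_tsum s (fun c _ => by positivity) (summable_pow j hj)

/-! ### The bound -/

noncomputable def CC : ℕ → ℝ
  | 0 => 1
  | k+1 => zetaR (k+2) * CC k

lemma CC_nonneg (k : ℕ) : 0 ≤ CC k := by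
  induction k with
  | zero => norm_num [CC]
  | succ k ih => exact mul_nonneg (zetaR_nonneg _) ih

lemma A_zero (N : ℕ) : A 0 N = N := by
  unfold A
  simp [g_zero]

lemma A_nonneg (k N : ℕ) : 0 ≤ A k N :=
  Finset.sum_nonneg fun n _ => g_nonneg k n

lemma A_le (k : ℕ) : ∀ N : ℕ, A k N ≤ CC k * N := by
  induction k with
  | zero => intro N; rw [A_zero, CC]; norm_num
  | succ k ih =>
      intro N
      rw [A_succ]
      have h1 : ∀ c ∈ Finset.Icc 1 N, (1/(c:ℝ))^(k+1) * A k (N/c)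
          ≤ CC k * (N:ℝ) * (1/(c:ℝ))^(k+2) := by
        intro c hc
        obtain ⟨hc1, hcN⟩ := Finset.mem_Icc.mp hc
        have hc0 : (0:ℝ) < (c:ℝ) := by exact_mod_cast hc1
        have h2 : A k (N/c) ≤ CC k * ((N/c : ℕ):ℝ) := ih (N/c)
        have h3 : ((N/c : ℕ):ℝ) ≤ (N:ℝ)/(c:ℝ) := Nat.cast_div_le
        have h4 : A k (N/c) ≤ CC k * ((N:ℝ)/(c:ℝ)) :=
          h2.trans (by nlinarith [CC_nonneg k])
        calc (1/(c:ℝ))^(k+1) * A k (N/c)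
            ≤ (1/(c:ℝ))^(k+1) * (CC k * ((N:ℝ)/(c:ℝ))) :=
              mul_le_mul_of_nonneg_left h4 (by positivity)
          _ = CC k * (N:ℝ) * (1/(c:ℝ))^(k+2) := by
              rw [pow_succ]
              field_simp
              have h5 : (c:ℝ)^2 * (1/(c:ℝ))^2 = 1 := by
                rw [← mul_pow, mul_one_div_cancel (ne_of_gt hc0), one_pow]
              linear_combination (-(1/(c:ℝ))^k * CC k * N) * h5
      calc ∑ c ∈ Finset.Icc 1 N, (1/(c:ℝ))^(k+1) * A k (N/c)
          ≤ ∑ c ∈ Finset.Icc 1 N, CC k * (N:ℝ) * (1/(c:ℝ))^(k+2) :=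
            Finset.sum_le_sum h1
        _ = CC k * (N:ℝ) * ∑ c ∈ Finset.Icc 1 N, (1/(c:ℝ))^(k+2) := by
            rw [Finset.mul_sum]
        _ ≤ CC k * (N:ℝ) * zetaR (k+2) := by
            apply mul_le_mul_of_nonneg_left (sum_le_zetaR (k+2) (by omega) _)
            have := CC_nonneg k
            positivity
        _ = CC (k+1) * N := by rw [show CC (k+1) = zetaR (k+2) * CC k from rfl]; ring

/-! ### Limits -/

lemma tendsto_nat_div_atTop (c : ℕ) (hc : 0 < c) :
    Tendsto (fun N : ℕ => N / c) atTop atTop := by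
  apply tendsto_atTop_atTop.mpr
  intro b
  exact ⟨b * c, fun N hN => (Nat.le_div_iff_mul_le hc).mpr hN⟩

lemma tendsto_cast_div (c : ℕ) (hc : 0 < c) :
    Tendsto (fun N : ℕ => ((N / c : ℕ):ℝ) / (N:ℝ)) atTop (nhds (1/(c:ℝ))) := by
  have hc0 : (0:ℝ) < (c:ℝ) := by exact_mod_cast hc
  have hlow : Tendsto (fun N : ℕ => 1/(c:ℝ) - 1/(N:ℝ)) atTop (nhds (1/(c:ℝ))) := by
    have h := (tendsto_const_nhds (x := 1/(c:ℝ)) (f := atTop)).sub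
      tendsto_one_div_atTop_nhds_zero_nat
    simpa using h
  refine tendsto_of_tendsto_of_tendsto_of_le_of_le' hlow tendsto_const_nhds ?_ ?_
  · filter_upwards [eventually_ge_atTop 1] with N hN
    have hN0 : (0:ℝ) < (N:ℝ) := by exact_mod_cast hN
    have hkey : (N:ℝ) < (c:ℝ) * ((N/c : ℕ):ℝ) + (c:ℝ) := by
      have h1 : N < c * (N/c) + c := by
        have h2 := Nat.div_add_mod N c
        have h3 := Nat.mod_lt N hc
        omega
      exact_mod_cast h1
    rw [sub_le_iff_le_add, ← add_div, div_le_div_iff₀ hc0 hN0]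
    nlinarith
  · filter_upwards [eventually_ge_atTop 1] with N hN
    have hN0 : (0:ℝ) < (N:ℝ) := by exact_mod_cast hN
    have h1 : ((N/c : ℕ):ℝ) ≤ (N:ℝ)/(c:ℝ) := Nat.cast_div_le
    rw [div_le_div_iff₀ hN0 hc0]
    have h2 : ((N:ℝ)/(c:ℝ)) * (c:ℝ) = (N:ℝ) := div_mul_cancel₀ _ (ne_of_gt hc0)
    nlinarith

lemma A_tendsto (k : ℕ) :
    Tendsto (fun N : ℕ => A k N / (N:ℝ)) atTop
      (nhds (∏ j ∈ Finset.Icc 2 (k+1), zetaR j)) := by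
  induction k with
  | zero =>
      have he : Finset.Icc 2 1 = (∅ : Finset ℕ) := by decide
      rw [he, Finset.prod_empty]
      apply Tendsto.congr' (f₁ := fun _ : ℕ => (1:ℝ))
      · filter_upwards [eventually_ge_atTop 1] with N hN
        have hN0 : ((N:ℕ):ℝ) ≠ 0 := Nat.cast_ne_zero.mpr (by omega)
        rw [A_zero, div_self hN0]
      · exact tendsto_const_nhds
  | succ k ih =>
      set L := ∏ j ∈ Finset.Icc 2 (k+1), zetaR j with hL
      have hprod : ∏ j ∈ Finset.Icc 2 (k+1+1), zetaR j = L * zetaR (k+2) := by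
        rw [hL, Finset.prod_Icc_succ_top (by omega)]
      rw [hprod]
      set F : ℕ → ℕ → ℝ := fun N c =>
        if c ∈ Finset.Icc 1 N then (1/(c:ℝ))^(k+1) * A k (N/c) / (N:ℝ) else 0 with hF
      set G : ℕ → ℝ := fun c => (1/(c:ℝ))^(k+2) * L with hG
      have hGs : ∑' c : ℕ, G c = L * zetaR (k+2) := by
        rw [hG, tsum_mul_right, ← zetaR_eq_nat (k+2) (by omega)]
        ring
      have hFs : ∀ N : ℕ, ∑' c : ℕ, F N c = A (k+1) N / (N:ℝ) := by
        intro N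
        rw [tsum_eq_sum (s := Finset.Icc 1 N) (fun c hc => by simp only [hF, if_neg hc])]
        rw [A_succ, Finset.sum_div]
        exact Finset.sum_congr rfl fun c hc => by simp only [hF, if_pos hc]
      have hmain : Tendsto (fun N => ∑' c : ℕ, F N c) atTop (nhds (∑' c : ℕ, G c)) := by
        apply tendsto_tsum_of_dominated_convergence
          (bound := fun c : ℕ => CC k * (1/(c:ℝ))^(k+2))
        · exact (summable_pow (k+2) (by omega)).mul_left _
        · intro c
          rcases Nat.eq_zero_or_pos c with rfl | hc
          · have h0 : ∀ N, F N 0 = 0 := fun N => by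
              simp [hF]
            have hG0 : G 0 = 0 := by
              simp [hG, zero_pow (show k+2 ≠ 0 by omega)]
            rw [hG0]
            exact Tendsto.congr (fun N => (h0 N).symm) tendsto_const_nhds
          · have hc0 : (0:ℝ) < (c:ℝ) := by exact_mod_cast hc
            have h1 := (ih.comp (tendsto_nat_div_atTop c hc)).mul (tendsto_cast_div c hc)
            have h2 := h1.const_mul ((1/(c:ℝ))^(k+1))
            have hlim : (1/(c:ℝ))^(k+1) * (L * (1/(c:ℝ))) = G c := by
              rw [hG, pow_succ]; ring
            rw [hlim] at h2
            apply h2.congr'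
            filter_upwards [eventually_ge_atTop c, eventually_ge_atTop 1] with N hN hN1
            have hM1 : 1 ≤ N / c := (Nat.le_div_iff_mul_le hc).mpr (by omega)
            have hM0 : ((N/c : ℕ):ℝ) ≠ 0 := by
              have : (1:ℝ) ≤ ((N/c : ℕ):ℝ) := by exact_mod_cast hM1
              linarith
            have hN0 : ((N:ℕ):ℝ) ≠ 0 := Nat.cast_ne_zero.mpr (by omega)
            have hcN : c ∈ Finset.Icc 1 N := Finset.mem_Icc.mpr ⟨hc, hN⟩
            simp only [hF, if_pos hcN, Function.comp]
            field_simp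
        · filter_upwards [eventually_ge_atTop 1] with N hN c
          have hN0 : (0:ℝ) < (N:ℝ) := by exact_mod_cast hN
          by_cases hc : c ∈ Finset.Icc 1 N
          · obtain ⟨hc1, hcN⟩ := Finset.mem_Icc.mp hc
            have hc0 : (0:ℝ) < (c:ℝ) := by exact_mod_cast hc1
            have hval : F N c = (1/(c:ℝ))^(k+1) * A k (N/c) / (N:ℝ) := by
              simp only [hF, if_pos hc]
            have hnn : 0 ≤ (1/(c:ℝ))^(k+1) * A k (N/c) / (N:ℝ) := by
              have := A_nonneg k (N/c)
              positivity
            rw [hval, Real.norm_of_nonneg hnn]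
            have h3 : ((N/c : ℕ):ℝ) ≤ (N:ℝ)/(c:ℝ) := Nat.cast_div_le
            have h4 : A k (N/c) ≤ CC k * ((N:ℝ)/(c:ℝ)) :=
              (A_le k (N/c)).trans (by nlinarith [CC_nonneg k])
            calc (1/(c:ℝ))^(k+1) * A k (N/c) / (N:ℝ)
                ≤ (1/(c:ℝ))^(k+1) * (CC k * ((N:ℝ)/(c:ℝ))) / (N:ℝ) := by
                  gcongr
              _ = CC k * (1/(c:ℝ))^(k+2) := by
                  rw [pow_succ]
                  field_simp
                  have h5 : (c:ℝ)^2 * (c:ℝ)⁻¹^2 = 1 := by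
                    rw [← mul_pow, mul_inv_cancel₀ (ne_of_gt hc0), one_pow]
                  linear_combination (-((c:ℝ)⁻¹)^k * CC k) * h5
          · have hval : F N c = 0 := by simp only [hF, if_neg hc]
            rw [hval, norm_zero]
            exact mul_nonneg (CC_nonneg k) (by positivity)
      rw [hGs] at hmain
      exact hmain.congr hFs

/-- the Cesàro mean of B(ℓ,n)/n^{ℓ-1} converges to ζ(2)···ζ(ℓ). -/
theorem stmt_9 (ℓ : ℕ) (hℓ : 2 ≤ ℓ) :
    Tendsto (fun N : ℕ => (1 / (N : ℝ)) * ∑ n ∈ Finset.Icc 1 N,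
        (Bflag ℓ n : ℝ) / (n : ℝ) ^ (ℓ - 1))
      atTop (nhds (∏ j ∈ Finset.Icc 2 ℓ, zetaR j)) := by
  obtain ⟨k, rfl⟩ : ∃ k, ℓ = k + 2 := ⟨ℓ - 2, by omega⟩
  have h := A_tendsto (k+1)
  apply h.congr
  intro N
  rw [one_div, inv_mul_eq_div]
  unfold A
  congr 1
  apply Finset.sum_congr rfl
  intro n hn
  have hn1 : 1 ≤ n := (Finset.mem_Icc.mp hn).1
  rw [Bflag_eq_Bf, ← T_eq_Bf _ n hn1]
  rfl
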